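/- Let R be a commutative ring and let A = [[a,b,0],[s·c,d,0],[0,0,1]] ∈ SL(3,R) with s = s₁s₂, where s₁ divides a-1, s₁ divides d-1, s₂ divides a+1, s₂ divides d+1. Let t₁, t₂ ∈ R satisfy a = 1 + s₁t₁ = -1 + s₂t₂. Then the following explicit identity of 3×3 matrices holds: t₁₃(s₂) · t₂₁(c) · t₃₁(-t₂) · t₁₃(-t₁) · t₂₃(-s₂c) · t₃₁(-s₁) · ( A · t₃₁(s₁) ) · t₁₂(-b) · t₁₃(t₁+s₂) · t₃₁(-t₂) · t₃₂(-s₁b) = [[-a, -s·b, 0],[c, d, 0],[0, 0, -1]], where the factors multiply A in the order described (left factors applied on the left, right factors on the right as in the proof). -/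

import Mathlib

set_option maxHeartbeats 4000000

/-- The elementary transvection `t_{ij}(ξ) = 1 + ξ e_{ij}` in `SL(3,R)`
(indices `0,1,2` correspond to `1,2,3`). -/
def t {R : Type*} [CommRing R] (i j : Fin 3) (ξ : R) : Matrix (Fin 3) (Fin 3) R :=
  1 + Matrix.single i j ξ

lemma tmat {R : Type*} [CommRing R] (i j : Fin 3) (ξ : R) :
    t i j ξ = (1 : Matrix (Fin 3) (Fin 3) R) +
      Matrix.of (fun k l => if k = i ∧ l = j then ξ else 0) := by
  unfold t; ext k l; simp [Matrix.single]; aesop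

lemma t02' {R : Type*} [CommRing R] (ξ : R) : t 0 2 ξ = !![1,0,ξ;0,1,0;0,0,1] := by
  rw [tmat]; ext i j; fin_cases i <;> fin_cases j <;>
    simp [Matrix.one_apply, Matrix.vecHead, Matrix.vecTail]

lemma t01' {R : Type*} [CommRing R] (ξ : R) : t 0 1 ξ = !![1,ξ,0;0,1,0;0,0,1] := by
  rw [tmat]; ext i j; fin_cases i <;> fin_cases j <;>
    simp [Matrix.one_apply, Matrix.vecHead, Matrix.vecTail]

lemma t10' {R : Type*} [CommRing R] (ξ : R) : t 1 0 ξ = !![1,0,0;ξ,1,0;0,0,1] := by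
  rw [tmat]; ext i j; fin_cases i <;> fin_cases j <;>
    simp [Matrix.one_apply, Matrix.vecHead, Matrix.vecTail]

lemma t12' {R : Type*} [CommRing R] (ξ : R) : t 1 2 ξ = !![1,0,0;0,1,ξ;0,0,1] := by
  rw [tmat]; ext i j; fin_cases i <;> fin_cases j <;>
    simp [Matrix.one_apply, Matrix.vecHead, Matrix.vecTail]

lemma t20' {R : Type*} [CommRing R] (ξ : R) : t 2 0 ξ = !![1,0,0;0,1,0;ξ,0,1] := by
  rw [tmat]; ext i j; fin_cases i <;> fin_cases j <;>
    simp [Matrix.one_apply, Matrix.vecHead, Matrix.vecTail]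

lemma t21' {R : Type*} [CommRing R] (ξ : R) : t 2 1 ξ = !![1,0,0;0,1,0;0,ξ,1] := by
  rw [tmat]; ext i j; fin_cases i <;> fin_cases j <;>
    simp [Matrix.one_apply, Matrix.vecHead, Matrix.vecTail]

/-- Starting from `A`, multiply on the right by `t₃₁(s₁)`; on the left by
`t₂₃(-s₂c)` then `t₁₃(-t₁)`; on the left by `t₃₁(-s₁)`; on the right by
`t₁₂(-b)` then `t₁₃(t₁+s₂)`; on the left by `t₃₁(-t₂)` then `t₂₁(c)`;
on the left by `t₁₃(s₂)`; on the right by `t₃₁(-t₂)` then `t₃₂(-s₁b)`;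
the result is `[[-a, -sb, 0],[c, d, 0],[0, 0, -1]]`. -/
theorem swindling_SL3_explicit {R : Type*} [CommRing R]
    (a b c d s s₁ s₂ t₁ t₂ : R)
    (hdet : a * d - s * b * c = 1) (hs : s = s₁ * s₂)
    (ha1 : a = 1 + s₁ * t₁) (ha2 : a = -1 + s₂ * t₂)
    (hd1 : s₁ ∣ d - 1) (hd2 : s₂ ∣ d + 1) :
    t 0 2 s₂ *
      (t 1 0 c * (t 2 0 (-t₂) *
        ((t 2 0 (-s₁) *
            (t 0 2 (-t₁) * (t 1 2 (-(s₂ * c)) *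
              (!![a, b, 0; s * c, d, 0; 0, 0, 1] * t 2 0 s₁))))
          * t 0 1 (-b) * t 0 2 (t₁ + s₂))))
      * t 2 0 (-t₂) * t 2 1 (-(s₁ * b))
      = !![-a, -(s * b), 0; c, d, 0; 0, 0, -1] := by
  simp only [t02', t01', t10', t12', t20', t21']
  ext i j
  fin_cases i <;> fin_cases j <;> simp [Matrix.mul_fin_three] <;> ring_nf
  · linear_combination (2 - 1*t₁*t₂ - 2*s₂*t₂ + s₂*t₁*t₂^2 + s₂^2*t₂^2 - 1*s₁*s₂ + s₁*s₂*t₁*t₂ + s₁*s₂^2*t₂) * ha1 + (1 - 1*s₂*t₂) * (ha2 - ha1)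
  · linear_combination (b) * hs + (-1*b + b*s₂*t₂ - 1*b*s₁*t₁ + b*s₁*s₂*t₁*t₂ + b*s₁*s₂^2*t₂ + b*s₁^2*s₂*t₁ + b*s₁^2*s₂^2) * ha1 + (-1*b*s₁*s₂) * (ha2 - ha1)
  · linear_combination (t₁ + s₂ - 1*s₂*t₁*t₂ - 1*s₂^2*t₂ - 1*s₁*s₂*t₁ - 1*s₁*s₂^2) * ha1 + (s₂) * (ha2 - ha1)
  · linear_combination (c - 1*c*t₁*t₂ - 1*c*s₂*t₂) * hs + (c - 1*c*t₁*t₂ - 1*c*s₂*t₂) * ha1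
  · linear_combination (-1*b*c - 1*b*c*s₁*t₁ - 1*b*c*s₁*s₂) * hs + (-1*b*c - 1*b*c*s₁*t₁ - 1*b*c*s₁*s₂) * ha1
  · linear_combination (c*t₁ + c*s₂) * hs + (c*t₁ + c*s₂) * ha1
  · linear_combination (-1*t₂ + t₁*t₂^2 + s₂*t₂^2 - 1*s₁ + s₁*t₁*t₂ + s₁*s₂*t₂) * ha1 + (-1*t₂) * (ha2 - ha1)
  · linear_combination (b*t₂ + b*s₁ + b*s₁*t₁*t₂ + b*s₁*s₂*t₂ + b*s₁^2*t₁ + b*s₁^2*s₂) * ha1 + (-1*b*s₁) * (ha2 - ha1)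
  · linear_combination (-1*t₁*t₂ - 1*s₂*t₂ - 1*s₁*t₁ - 1*s₁*s₂) * ha1 + (1) * (ha2 - ha1)
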